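/- Let w ∈ S_n, (i,j) ∈ E(w) with r = r_{i,j}(w), and let I = {i_1 < ... < i_{r+1}} ⊆ [i], J = {j_1 < ... < j_{r+1}} ⊆ [j] define an elusive minor. Suppose (i',j') ∈ E(w) with r_{i',j'}(w) < r, i_p ≤ i' < i_{p+1}, and j_ℓ ≤ j' < j_{ℓ+1} (with i_0 = j_0 = 1, indices 0 ≤ p, ℓ ≤ r). Then it is impossible that both p + ℓ > r + 1 and r_{i',j'}(w) < p + ℓ - (r+1). -/
import Mathlib


/-- Rank function of a permutation: `rk w i j = #{a : 1 ≤ a ≤ i, w a ≤ j}`. -/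
def rk (w : Equiv.Perm ℕ) (i j : ℕ) : ℕ :=
  ((Finset.Icc 1 i).filter (fun a => w a ≤ j)).card

/-- `(i,j)` is in the Rothe diagram `D(w)`. -/
def inRothe (w : Equiv.Perm ℕ) (i j : ℕ) : Prop :=
  j < w i ∧ i < w.symm j

instance (w : Equiv.Perm ℕ) (i j : ℕ) : Decidable (inRothe w i j) := by
  unfold inRothe; infer_instance

/-- `(i,j)` is in Fulton's essential set `E(w)`. -/
def inEss (w : Equiv.Perm ℕ) (i j : ℕ) : Prop :=
  inRothe w i j ∧ ¬ inRothe w (i+1) j ∧ ¬ inRothe w i (j+1)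

/-- The minor with row set `I` and column set `J` belongs to `(i,j) ∈ E(w)`. -/
def belongsTo (w : Equiv.Perm ℕ) (I J : Finset ℕ) (i j : ℕ) : Prop :=
  inEss w i j ∧ I ⊆ Finset.Icc 1 i ∧ J ⊆ Finset.Icc 1 j ∧
    I.card = rk w i j + 1 ∧ J.card = rk w i j + 1

/-- The minor `m_{I,J}` attends `M^{[i',j']}`. -/
def attends (w : Equiv.Perm ℕ) (I J : Finset ℕ) (i' j' : ℕ) : Prop :=
  (rk w i' j' < (I ∩ Finset.Icc 1 i').card ∧ (J ∩ Finset.Icc 1 j').card = J.card) ∨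
  ((I ∩ Finset.Icc 1 i').card = I.card ∧ rk w i' j' < (J ∩ Finset.Icc 1 j').card)

/-- The minor `m_{I,J}` belonging to `(i,j) ∈ E(w)` is elusive. -/
def elusive (w : Equiv.Perm ℕ) (I J : Finset ℕ) (i j : ℕ) : Prop :=
  belongsTo w I J i j ∧
    ∀ i' j', inEss w i' j' → rk w i' j' < rk w i j → ¬ attends w I J i' j'

/- ### Auxiliary lemmas -/

lemma Icc_succ_right' (a : ℕ) : Finset.Icc 1 (a+1) = insert (a+1) (Finset.Icc 1 a) := by
  ext x
  simp only [Finset.mem_Icc, Finset.mem_insert]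
  omega

lemma rk_row_succ_of_gt (w : Equiv.Perm ℕ) (a b : ℕ) (h : b < w (a+1)) :
    rk w (a+1) b = rk w a b := by
  unfold rk
  rw [Icc_succ_right', Finset.filter_insert, if_neg (by omega)]

lemma rk_row_succ_of_le (w : Equiv.Perm ℕ) (a b : ℕ) (h : w (a+1) ≤ b) :
    rk w (a+1) b = rk w a b + 1 := by
  unfold rk
  rw [Icc_succ_right', Finset.filter_insert, if_pos h, Finset.card_insert_of_notMem]
  intro hmem
  simp only [Finset.mem_filter, Finset.mem_Icc] at hmem
  omega

lemma rk_col_succ_of_gt (w : Equiv.Perm ℕ) (a b : ℕ) (h : a < w.symm (b+1)) :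
    rk w a (b+1) = rk w a b := by
  unfold rk
  congr 1
  apply Finset.filter_congr
  intro x hx
  simp only [Finset.mem_Icc] at hx
  constructor
  · intro hxb
    have hne : w x ≠ b + 1 := by
      intro heq
      have : x = w.symm (b+1) := by rw [← heq, Equiv.symm_apply_apply]
      omega
    omega
  · omega

lemma rk_col_succ_of_le (w : Equiv.Perm ℕ) (a b : ℕ)
    (h1 : 1 ≤ w.symm (b+1)) (h2 : w.symm (b+1) ≤ a) :
    rk w a (b+1) = rk w a b + 1 := by
  unfold rk
  have key : (Finset.Icc 1 a).filter (fun x => w x ≤ b + 1)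
      = insert (w.symm (b+1)) ((Finset.Icc 1 a).filter (fun x => w x ≤ b)) := by
    ext x
    simp only [Finset.mem_filter, Finset.mem_insert, Finset.mem_Icc]
    constructor
    · rintro ⟨hx, hxb⟩
      by_cases heq : w x = b + 1
      · left; rw [← heq, Equiv.symm_apply_apply]
      · right; exact ⟨hx, by omega⟩
    · rintro (rfl | ⟨hx, hxb⟩)
      · exact ⟨⟨h1, h2⟩, by rw [Equiv.apply_symm_apply]⟩
      · exact ⟨hx, by omega⟩
  rw [key, Finset.card_insert_of_notMem]
  intro hmem
  simp only [Finset.mem_filter] at hmem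
  have := Equiv.apply_symm_apply w (b+1)
  omega

lemma rothe_bound (n : ℕ) (w : Equiv.Perm ℕ)
    (hw : ∀ a, a ∉ Finset.Icc 1 n → w a = a) {a b : ℕ}
    (h : inRothe w a b) : a ≤ n ∧ b + 1 ≤ n := by
  obtain ⟨h1, h2⟩ := h
  have ha : a ∈ Finset.Icc 1 n := by
    by_contra hna
    have hwa := hw a hna
    simp only [Finset.mem_Icc, not_and, not_le] at hna
    by_cases hb : b ∈ Finset.Icc 1 n
    · have hsb : w.symm b ∈ Finset.Icc 1 n := by
        by_contra hnb
        have := hw _ hnb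
        rw [Equiv.apply_symm_apply] at this
        rw [← this] at hnb
        exact hnb hb
      simp only [Finset.mem_Icc] at hb hsb
      omega
    · have : w.symm b = b := (Equiv.symm_apply_eq w).mpr (hw b hb).symm
      omega
  have hwa : w a ∈ Finset.Icc 1 n := by
    by_contra hna
    have h3 := hw _ hna
    have := w.injective h3
    rw [this] at hna
    exact hna ha
  simp only [Finset.mem_Icc] at ha hwa
  omega

/-- Southeast walk within the Rothe diagram to an essential box of the same rank. -/
lemma se_walk (n : ℕ) (w : Equiv.Perm ℕ)
    (hw : ∀ a, a ∉ Finset.Icc 1 n → w a = a) :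
    ∀ m a b, 2*n ≤ m + a + b → inRothe w a b →
      ∃ e f, inEss w e f ∧ a ≤ e ∧ b ≤ f ∧ rk w e f = rk w a b := by
  intro m
  induction m with
  | zero =>
    intro a b hm hro
    have := rothe_bound n w hw hro
    omega
  | succ m ih =>
    intro a b hm hro
    by_cases hd : inRothe w (a+1) b
    · obtain ⟨e, f, hef, hae, hbf, hrk⟩ := ih (a+1) b (by omega) hd
      exact ⟨e, f, hef, by omega, hbf, by rw [hrk, rk_row_succ_of_gt w a b hd.1]⟩
    · by_cases hr2 : inRothe w a (b+1)
      · obtain ⟨e, f, hef, hae, hbf, hrk⟩ := ih a (b+1) (by omega) hr2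
        exact ⟨e, f, hef, hae, by omega, by rw [hrk, rk_col_succ_of_gt w a b hr2.2]⟩
      · exact ⟨a, b, ⟨hro, hd, hr2⟩, le_refl _, le_refl _, rfl⟩

/-- in the setting of the proof of Theorem 1.5, with i_p ≤ i' < i_{p+1}
and j_ℓ ≤ j' < j_{ℓ+1} (i_0 = j_0 = 1), it cannot happen that both p + ℓ > r + 1 and
r_{i',j'}(w) < p + ℓ - (r+1). -/
theorem no_bad_position (n : ℕ) (w : Equiv.Perm ℕ)
    (hw : ∀ a, a ∉ Finset.Icc 1 n → w a = a)
    (i j r : ℕ) (I J : Finset ℕ)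
    (he : inEss w i j) (hr : r = rk w i j)
    (hel : elusive w I J i j)
    (iSeq jSeq : ℕ → ℕ)
    (hi0 : iSeq 0 = 1) (hj0 : jSeq 0 = 1)
    (hiSeq : ∀ k, 1 ≤ k → k ≤ r + 1 →
      iSeq k ∈ I ∧ (I ∩ Finset.Icc 1 (iSeq k)).card = k)
    (hjSeq : ∀ k, 1 ≤ k → k ≤ r + 1 →
      jSeq k ∈ J ∧ (J ∩ Finset.Icc 1 (jSeq k)).card = k)
    (p ℓ i' j' : ℕ) (hp : p ≤ r) (hl : ℓ ≤ r)
    (he' : inEss w i' j') (hr' : rk w i' j' < r)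
    (h1 : iSeq p ≤ i') (h2 : i' < iSeq (p + 1))
    (h3 : jSeq ℓ ≤ j') (h4 : j' < jSeq (ℓ + 1)) :
    ¬ (r + 1 < p + ℓ ∧ rk w i' j' + (r + 1) < p + ℓ) := by
  rintro ⟨-, hbad⟩
  obtain ⟨⟨hess, hIsub, hJsub, hIcard, hJcard⟩, helu⟩ := hel
  obtain ⟨⟨hwi, hwj⟩, -, -⟩ := he
  have hw0 : w 0 = 0 := hw 0 (by simp)
  -- i' < i and j' < j
  have hiI : iSeq (p+1) ∈ I := (hiSeq (p+1) (by omega) (by omega)).1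
  have hii : i' < i := by
    have := hIsub hiI
    simp only [Finset.mem_Icc] at this
    omega
  have hjJ : jSeq (ℓ+1) ∈ J := (hjSeq (ℓ+1) (by omega) (by omega)).1
  have hjj : j' < j := by
    have := hJsub hjJ
    simp only [Finset.mem_Icc] at this
    omega
  -- count bounds
  have hcI : p ≤ (I ∩ Finset.Icc 1 i').card := by
    rcases Nat.eq_zero_or_pos p with hp0 | hp0
    · omega
    · obtain ⟨-, hc⟩ := hiSeq p (by omega) (by omega)
      rw [← hc]
      exact Finset.card_le_card
        (Finset.inter_subset_inter_left (Finset.Icc_subset_Icc_right h1))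
  have hcJ : ℓ ≤ (J ∩ Finset.Icc 1 j').card := by
    rcases Nat.eq_zero_or_pos ℓ with hl0 | hl0
    · omega
    · obtain ⟨-, hc⟩ := hjSeq ℓ (by omega) (by omega)
      rw [← hc]
      exact Finset.card_le_card
        (Finset.inter_subset_inter_left (Finset.Icc_subset_Icc_right h3))
  -- Row lemma: no box (a, j) with a ≤ i can have rank < both r and the I-count.
  have lemA : ∀ a, a ≤ i → rk w a j < (I ∩ Finset.Icc 1 a).card → rk w a j < r → False := by
    intro a
    induction a with
    | zero =>
      intro _ hlt _
      have hemp : Finset.Icc 1 0 = ∅ := by simp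
      rw [hemp, Finset.inter_empty] at hlt
      simp at hlt
    | succ a ihA =>
      intro ha hlt hrlt
      by_cases hcase : w (a+1) ≤ j
      · have hrk := rk_row_succ_of_le w a j hcase
        have hsubs : I ∩ Finset.Icc 1 (a+1) ⊆ insert (a+1) (I ∩ Finset.Icc 1 a) := by
          intro x hx
          simp only [Finset.mem_inter, Finset.mem_Icc, Finset.mem_insert] at hx ⊢
          by_cases hxa : x = a+1
          · left; exact hxa
          · right; exact ⟨hx.1, hx.2.1, by omega⟩
        have hcard := (Finset.card_le_card hsubs).trans (Finset.card_insert_le _ _)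
        exact ihA (by omega) (by omega) (by omega)
      · have hro : inRothe w (a+1) j := ⟨by omega, by omega⟩
        obtain ⟨e, f, hef, hae, hjf, hrkef⟩ := se_walk n w hw (2*n) (a+1) j (by omega) hro
        refine helu e f hef (by omega) (Or.inl ⟨?_, ?_⟩)
        · rw [hrkef]
          calc rk w (a+1) j < (I ∩ Finset.Icc 1 (a+1)).card := hlt
            _ ≤ (I ∩ Finset.Icc 1 e).card := Finset.card_le_card
                (Finset.inter_subset_inter_left (Finset.Icc_subset_Icc_right hae))
        · have hJf : J ⊆ Finset.Icc 1 f := hJsub.trans (Finset.Icc_subset_Icc_right hjf)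
          rw [Finset.inter_eq_left.mpr hJf]
  -- Column lemma: no box (i, b) with b ≤ j can have rank < both r and the J-count.
  have lemB : ∀ b, b ≤ j → rk w i b < (J ∩ Finset.Icc 1 b).card → rk w i b < r → False := by
    intro b
    induction b with
    | zero =>
      intro _ hlt _
      have hemp : Finset.Icc 1 0 = ∅ := by simp
      rw [hemp, Finset.inter_empty] at hlt
      simp at hlt
    | succ b ihB =>
      intro hb hlt hrlt
      by_cases hcase : w.symm (b+1) ≤ i
      · have h0 : 1 ≤ w.symm (b+1) := by
          by_contra h0
          have h00 : w.symm (b+1) = 0 := by omega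
          have happ := Equiv.apply_symm_apply w (b+1)
          rw [h00, hw0] at happ
          omega
        have hrk := rk_col_succ_of_le w i b h0 hcase
        have hsubs : J ∩ Finset.Icc 1 (b+1) ⊆ insert (b+1) (J ∩ Finset.Icc 1 b) := by
          intro x hx
          simp only [Finset.mem_inter, Finset.mem_Icc, Finset.mem_insert] at hx ⊢
          by_cases hxb : x = b+1
          · left; exact hxb
          · right; exact ⟨hx.1, hx.2.1, by omega⟩
        have hcard := (Finset.card_le_card hsubs).trans (Finset.card_insert_le _ _)
        exact ihB (by omega) (by omega) (by omega)
      · have hro : inRothe w i (b+1) := ⟨by omega, by omega⟩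
        obtain ⟨e, f, hef, hie, hbf, hrkef⟩ := se_walk n w hw (2*n) i (b+1) (by omega) hro
        refine helu e f hef (by omega) (Or.inr ⟨?_, ?_⟩)
        · have hIe : I ⊆ Finset.Icc 1 e := hIsub.trans (Finset.Icc_subset_Icc_right hie)
          rw [Finset.inter_eq_left.mpr hIe]
        · rw [hrkef]
          calc rk w i (b+1) < (J ∩ Finset.Icc 1 (b+1)).card := hlt
            _ ≤ (J ∩ Finset.Icc 1 f).card := Finset.card_le_card
                (Finset.inter_subset_inter_left (Finset.Icc_subset_Icc_right hbf))
  -- rank lower bounds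
  have hA : p ≤ rk w i' j := by
    by_contra hcon
    push_neg at hcon
    exact lemA i' (by omega) (by omega) (by omega)
  have hB : ℓ ≤ rk w i j' := by
    by_contra hcon
    push_neg at hcon
    exact lemB j' (by omega) (by omega) (by omega)
  -- submodularity
  have hunion : Finset.Icc 1 i' ∪ Finset.Icc (i'+1) i = Finset.Icc 1 i := by
    ext x
    simp only [Finset.mem_union, Finset.mem_Icc]
    omega
  have hsplit : ∀ b, rk w i b
      = rk w i' b + ((Finset.Icc (i'+1) i).filter (fun a => w a ≤ b)).card := by
    intro b
    have hdisj : Disjoint ((Finset.Icc 1 i').filter (fun a => w a ≤ b))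
        ((Finset.Icc (i'+1) i).filter (fun a => w a ≤ b)) := by
      simp only [Finset.disjoint_left, Finset.mem_filter, Finset.mem_Icc]
      rintro x ⟨hx1, -⟩ ⟨hx2, -⟩
      omega
    unfold rk
    rw [← Finset.card_union_of_disjoint hdisj, ← Finset.filter_union, hunion]
  have hmono2 : ((Finset.Icc (i'+1) i).filter (fun a => w a ≤ j')).card
      ≤ ((Finset.Icc (i'+1) i).filter (fun a => w a ≤ j)).card := by
    apply Finset.card_le_card
    intro x hx
    simp only [Finset.mem_filter] at hx ⊢
    exact ⟨hx.1, by omega⟩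
  have hsub1 := hsplit j
  have hsub2 := hsplit j'
  omega
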